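/- arXiv:1807.06062 — 11 statements merged into one kernel-verified Lean document; each statement's English description precedes it below -/
import Mathlib

section
/- Let X = [[A, B], [Bᵀ, D]] be a symmetric real n×n matrix satisfying Xᵀ I_{p,q} X = I_{p,q}, with A of size p×p and D of size q×q. Then X is positive definite if and only if both diagonal blocks A and D are positive definite. -/
open Matrix

theorem stmt_1 {p q : ℕ}
    (A : Matrix (Fin p) (Fin p) ℝ) (B : Matrix (Fin p) (Fin q) ℝ)
    (D : Matrix (Fin q) (Fin q) ℝ) (hA : A.IsSymm) (hD : D.IsSymm)
    (hX : (fromBlocks A B Bᵀ D)ᵀ * fromBlocks 1 0 0 (-1) * fromBlocks A B Bᵀ D =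
      fromBlocks 1 0 0 (-1)) :
    (fromBlocks A B Bᵀ D).PosDef ↔ A.PosDef ∧ D.PosDef := by
  have hA' : Aᵀ = A := hA
  have hD' : Dᵀ = D := hD
  have hAh : A.IsHermitian := by
    ext i j; simpa using congrFun (congrFun hA' i) j
  have hDh : D.IsHermitian := by
    ext i j; simpa using congrFun (congrFun hD' i) j
  have h := hX
  rw [fromBlocks_transpose, hA', hD', transpose_transpose] at h
  simp only [fromBlocks_multiply, Matrix.mul_one, Matrix.mul_zero, Matrix.zero_mul,
    Matrix.one_mul, Matrix.mul_neg, add_zero, zero_add, Matrix.neg_mul] at h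
  have h11 := congrArg toBlocks₁₁ h
  have h12 := congrArg toBlocks₁₂ h
  simp only [toBlocks_fromBlocks₁₁, toBlocks_fromBlocks₁₂] at h11 h12
  have h1 : A * A - B * Bᵀ = 1 := by rw [sub_eq_add_neg]; exact h11
  have h2 : A * B = B * D :=
    sub_eq_zero.mp (by rw [sub_eq_add_neg]; exact h12)
  have hBH : Bᴴ = Bᵀ := by ext i j; simp
  constructor
  · intro hXp
    constructor
    · refine PosDef.of_dotProduct_mulVec_pos hAh fun x hx => ?_
      have hne : Sum.elim x 0 ≠ (0 : Fin p ⊕ Fin q → ℝ) := by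
        intro hc
        exact hx (funext fun i => congrFun hc (Sum.inl i))
      have := hXp.dotProduct_mulVec_pos (x := Sum.elim x 0) hne
      simpa [dotProduct_block, fromBlocks_mulVec, star_trivial] using this
    · refine PosDef.of_dotProduct_mulVec_pos hDh fun y hy => ?_
      have hne : Sum.elim (0 : Fin p → ℝ) y ≠ (0 : Fin p ⊕ Fin q → ℝ) := by
        intro hc
        exact hy (funext fun i => congrFun hc (Sum.inr i))
      have := hXp.dotProduct_mulVec_pos (x := Sum.elim (0 : Fin p → ℝ) y) hne
      simpa [dotProduct_block, fromBlocks_mulVec, star_trivial] using this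
  · rintro ⟨hAp, hDp⟩
    haveI := hAp.isUnit.invertible
    haveI := hDp.isUnit.invertible
    have hschur : A - B * D⁻¹ * Bᵀ = A⁻¹ := by
      have key : A * (A - B * D⁻¹ * Bᵀ) = 1 := by
        have : A * (B * D⁻¹ * Bᵀ) = B * Bᵀ :=
          calc A * (B * D⁻¹ * Bᵀ) = (A * B) * (D⁻¹ * Bᵀ) := by
                rw [Matrix.mul_assoc, Matrix.mul_assoc]
            _ = B * (D * D⁻¹) * Bᵀ := by
                rw [h2, Matrix.mul_assoc, Matrix.mul_assoc, Matrix.mul_assoc]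
            _ = B * Bᵀ := by rw [Matrix.mul_inv_of_invertible, Matrix.mul_one]
        rw [Matrix.mul_sub, this, h1]
      exact (Matrix.inv_eq_right_inv key).symm
    refine PosDef.of_dotProduct_mulVec_pos ?_ fun v hv => ?_
    · rw [← hBH, isHermitian_fromBlocks_iff]
      exact ⟨hAh, rfl, conjTranspose_conjTranspose B, hDh⟩
    · have hq := schur_complement_eq₂₂ A B (v ∘ Sum.inl) (v ∘ Sum.inr) hDh
      rw [hBH, hschur] at hq
      rw [dotProduct_mulVec, ← Sum.elim_comp_inl_inr v, hq]
      rcases eq_or_ne (v ∘ Sum.inl) 0 with hx | hx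
      · have hy : v ∘ Sum.inr ≠ 0 := by
          intro hc
          apply hv
          ext i
          cases i with
          | inl i => exact congrFun hx i
          | inr i => exact congrFun hc i
        rw [hx, mulVec_zero, zero_add]
        apply add_pos_of_pos_of_nonneg
        · rw [← dotProduct_mulVec]; exact hDp.dotProduct_mulVec_pos hy
        · rw [← dotProduct_mulVec]; exact hAp.inv.posSemidef.dotProduct_mulVec_nonneg _
      · apply add_pos_of_nonneg_of_pos
        · rw [← dotProduct_mulVec]; exact hDp.posSemidef.dotProduct_mulVec_nonneg _
        · rw [← dotProduct_mulVec]; exact hAp.inv.dotProduct_mulVec_pos hx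
end

section
/- Let X = [[A, B], [Bᵀ, D]] be a symmetric real matrix satisfying Xᵀ I_{p,q} X = I_{p,q}, with A and D positive definite. Then the Schur complement of A in X equals D⁻¹, i.e., D - Bᵀ A⁻¹ B = D⁻¹. -/
open Matrix

theorem stmt_2 {p q : ℕ}
    (A : Matrix (Fin p) (Fin p) ℝ) (B : Matrix (Fin p) (Fin q) ℝ)
    (D : Matrix (Fin q) (Fin q) ℝ) (hA : A.PosDef) (hD : D.PosDef)
    (hX : (fromBlocks A B Bᵀ D)ᵀ * fromBlocks 1 0 0 (-1) * fromBlocks A B Bᵀ D =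
      fromBlocks 1 0 0 (-1)) :
    D - Bᵀ * A⁻¹ * B = D⁻¹ := by
  have hAs : Aᵀ = A := hA.isHermitian
  have hDs : Dᵀ = D := hD.isHermitian
  rw [fromBlocks_transpose, transpose_transpose, fromBlocks_multiply,
    fromBlocks_multiply, hAs, hDs] at hX
  have h21 := congrArg Matrix.toBlocks₂₁ hX
  have h22 := congrArg Matrix.toBlocks₂₂ hX
  simp only [toBlocks_fromBlocks₂₁, toBlocks_fromBlocks₂₂, Matrix.mul_one,
    Matrix.mul_zero, Matrix.zero_mul, add_zero, zero_add, Matrix.mul_neg,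
    Matrix.neg_mul, Matrix.one_mul] at h21 h22
  -- h21 : Bᵀ * A + -(D * Bᵀ) = 0
  -- h22 : Bᵀ * B + -(D * D) = -1
  have hBA : Bᵀ * A = D * Bᵀ := by
    have := h21; rwa [add_neg_eq_zero] at this
  have hDD : D * D - Bᵀ * B = 1 := by
    have h := h22
    rw [← sub_eq_add_neg] at h
    have h' := congrArg Neg.neg h
    simpa [neg_sub] using h'
  have hAinv : A * A⁻¹ = 1 := Matrix.mul_nonsing_inv A hA.det_pos.ne'.isUnit
  have key : D * (D - Bᵀ * A⁻¹ * B) = 1 := by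
    have hstep : D * (Bᵀ * A⁻¹ * B) = Bᵀ * B := by
      calc D * (Bᵀ * A⁻¹ * B) = (D * Bᵀ) * A⁻¹ * B := by
            rw [Matrix.mul_assoc, Matrix.mul_assoc, Matrix.mul_assoc]
        _ = (Bᵀ * A) * A⁻¹ * B := by rw [hBA]
        _ = Bᵀ * (A * A⁻¹) * B := by rw [Matrix.mul_assoc Bᵀ A A⁻¹]
        _ = Bᵀ * B := by rw [hAinv, Matrix.mul_one]
    rw [Matrix.mul_sub, hstep, hDD]
  exact (Matrix.inv_eq_right_inv key).symm
end

section
/- Let X = [[A, B], [Bᵀ, D]] be a symmetric real matrix satisfying Xᵀ I_{p,q} X = I_{p,q}, with A and D positive definite. Then the Schur complement of D in X equals A⁻¹, i.e., A - B D⁻¹ Bᵀ = A⁻¹. -/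
open Matrix

theorem stmt_3 {p q : ℕ}
    (A : Matrix (Fin p) (Fin p) ℝ) (B : Matrix (Fin p) (Fin q) ℝ)
    (D : Matrix (Fin q) (Fin q) ℝ) (hA : A.PosDef) (hD : D.PosDef)
    (hX : (fromBlocks A B Bᵀ D)ᵀ * fromBlocks 1 0 0 (-1) * fromBlocks A B Bᵀ D =
      fromBlocks 1 0 0 (-1)) :
    A - B * D⁻¹ * Bᵀ = A⁻¹ := by
  have hAT : Aᵀ = A := hA.isHermitian
  have hDT : Dᵀ = D := hD.isHermitian
  rw [fromBlocks_transpose, hAT, hDT, transpose_transpose,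
    fromBlocks_multiply, fromBlocks_multiply] at hX
  have h11 := congrArg Matrix.toBlocks₁₁ hX
  have h21 := congrArg Matrix.toBlocks₂₁ hX
  simp only [toBlocks_fromBlocks₁₁, toBlocks_fromBlocks₂₁, mul_one, mul_zero,
    Matrix.mul_one, Matrix.mul_zero, add_zero, zero_add, Matrix.mul_neg, mul_neg, Matrix.neg_mul, neg_mul] at h11 h21
  -- h11 : (A*1 + B*0)*A + (A*0 + B*(-1))*Bᵀ = 1
  -- h21 : (Bᵀ*1 + D*0)*A + (Bᵀ*0 + D*(-1))*Bᵀ = 0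
  have e1 : A * A - B * Bᵀ = 1 := by rw [sub_eq_add_neg]; exact h11
  have e2 : Bᵀ * A = D * Bᵀ := by rwa [add_neg_eq_zero] at h21
  have hDinv : D⁻¹ * D = 1 := Matrix.nonsing_inv_mul D (isUnit_iff_ne_zero.mpr hD.det_pos.ne')
  have key : (A - B * D⁻¹ * Bᵀ) * A = 1 := by
    have : B * D⁻¹ * (Bᵀ * A) = B * Bᵀ := by
      rw [e2, ← Matrix.mul_assoc, Matrix.mul_assoc B D⁻¹ D, hDinv, Matrix.mul_one]
    calc (A - B * D⁻¹ * Bᵀ) * A = A * A - B * D⁻¹ * (Bᵀ * A) := by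
          rw [Matrix.sub_mul, Matrix.mul_assoc]
    _ = A * A - B * Bᵀ := by rw [this]
    _ = 1 := e1
  exact (Matrix.inv_eq_left_inv key).symm
end

section
/- Let B be any real n×n matrix. Let A be the unique positive definite square root of I + BBᵀ and D the unique positive definite square root of I + BᵀB. Then AB = BD, and consequently the block matrix X = [[A, B], [Bᵀ, D]] is positive definite and satisfies Xᵀ I_{n,n} X = I_{n,n}. -/
open Matrix

lemma myTrace_nonneg {m : Type*} [Fintype m] [DecidableEq m] {M : Matrix m m ℝ}
    (hM : M.PosSemidef) : 0 ≤ M.trace := by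
  refine Finset.sum_nonneg fun i _ => ?_
  have := hM.dotProduct_mulVec_nonneg (Pi.single i 1)
  simpa [dotProduct, mulVec, Pi.single_apply] using this

lemma myConjT {p q : Type*} (X : Matrix p q ℝ) : Xᴴ = Xᵀ := by
  ext i j; simp [conjTranspose_apply]

lemma myDiag {m : Type*} [Fintype m] (A X : Matrix m m ℝ) (j : m) :
    (Xᵀ * A * X) j j = star (fun i => X i j) ⬝ᵥ A *ᵥ (fun i => X i j) := by
  simp [mul_apply, dotProduct, mulVec, Finset.sum_mul, Finset.mul_sum]
  rw [Finset.sum_comm]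
  congr 1; ext i; congr 1; ext k; ring

lemma sylvester {m : Type*} [Fintype m] [DecidableEq m] {A D X : Matrix m m ℝ}
    (hA : A.PosDef) (hD : D.PosDef) (h : A * X + X * D = 0) : X = 0 := by
  have hpsd1 : (Xᵀ * A * X).PosSemidef := by
    have := hA.posSemidef.conjTranspose_mul_mul_same X
    rwa [myConjT] at this
  have hpsd2 : (X * D * Xᵀ).PosSemidef := by
    have := hD.posSemidef.mul_mul_conjTranspose_same X
    rwa [myConjT] at this
  have hsum : (Xᵀ * A * X).trace + (X * D * Xᵀ).trace = 0 := by
    have : (X * D * Xᵀ).trace = (Xᵀ * (X * D)).trace := by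
      rw [trace_mul_comm]
    rw [this, Matrix.mul_assoc, ← trace_add, ← Matrix.mul_add, h, Matrix.mul_zero, trace_zero]
  have h1 : (Xᵀ * A * X).trace = 0 :=
    le_antisymm (by linarith [myTrace_nonneg hpsd2]) (myTrace_nonneg hpsd1)
  have hdiag : ∀ j, (Xᵀ * A * X) j j = 0 := by
    intro j
    have hnn : ∀ i ∈ Finset.univ, 0 ≤ (Xᵀ * A * X) i i := by
      intro i _
      have := hpsd1.dotProduct_mulVec_nonneg (Pi.single i 1)
      simpa [dotProduct, mulVec, Pi.single_apply] using this
    exact (Finset.sum_eq_zero_iff_of_nonneg hnn).mp h1 j (Finset.mem_univ j)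
  ext i j
  have hc : (fun i => X i j) = 0 := by
    by_contra hne
    have := hA.dotProduct_mulVec_pos hne
    rw [← myDiag, hdiag j] at this
    exact lt_irrefl _ this
  simpa using congrFun hc i

theorem stmt_7 {n : ℕ} (A B D : Matrix (Fin n) (Fin n) ℝ)
    (hA : A.PosDef) (hA2 : A * A = 1 + B * Bᵀ)
    (hD : D.PosDef) (hD2 : D * D = 1 + Bᵀ * B) :
    A * B = B * D ∧ (fromBlocks A B Bᵀ D).PosDef ∧
      (fromBlocks A B Bᵀ D)ᵀ * fromBlocks 1 0 0 (-1) * fromBlocks A B Bᵀ D =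
        fromBlocks 1 0 0 (-1) := by
  haveI := hA.isUnit.invertible
  haveI := hD.isUnit.invertible
  have hAsymm : Aᵀ = A := by rw [← myConjT]; exact hA.isHermitian
  have hDsymm : Dᵀ = D := by rw [← myConjT]; exact hD.isHermitian
  have hX : A * (A * B - B * D) + (A * B - B * D) * D = 0 := by
    have e : A * (A * B - B * D) + (A * B - B * D) * D = A * A * B - B * (D * D) := by
      noncomm_ring
    rw [e, hA2, hD2]; noncomm_ring
  have hABD : A * B = B * D := sub_eq_zero.mp (sylvester hA hD hX)
  have hBtA : Bᵀ * A = D * Bᵀ := by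
    have := congrArg Matrix.transpose hABD
    rwa [transpose_mul, transpose_mul, hAsymm, hDsymm] at this
  refine ⟨hABD, ?_, ?_⟩
  · -- PosDef
    have hAiB : A⁻¹ * B = B * D⁻¹ := by
      calc A⁻¹ * B = A⁻¹ * (B * D * D⁻¹) := by
            rw [Matrix.mul_inv_cancel_right_of_invertible]
        _ = A⁻¹ * (A * (B * D⁻¹)) := by rw [← hABD, Matrix.mul_assoc]
        _ = B * D⁻¹ := by rw [Matrix.inv_mul_cancel_left_of_invertible]
    have hSchur : D - Bᵀ * A⁻¹ * B = D⁻¹ := by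
      have e1 : Bᵀ * A⁻¹ * B = Bᵀ * B * D⁻¹ := by
        rw [Matrix.mul_assoc, hAiB, Matrix.mul_assoc]
      have e2 : Bᵀ * B = D * D - 1 := by rw [hD2]; abel
      rw [e1, e2, Matrix.sub_mul, Matrix.mul_assoc, Matrix.mul_inv_of_invertible,
        Matrix.mul_one, Matrix.one_mul]
      abel
    have hSchurT : D - Bᴴ * A⁻¹ * B = D⁻¹ := by rw [myConjT]; exact hSchur
    have hHerm : (fromBlocks A B Bᵀ D).IsHermitian := by
      show (fromBlocks A B Bᵀ D)ᴴ = _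
      rw [myConjT, fromBlocks_transpose, hAsymm, hDsymm, transpose_transpose]
    refine PosDef.of_dotProduct_mulVec_pos hHerm fun z hz => ?_
    have hz' : z = (z ∘ Sum.inl) ⊕ᵥ (z ∘ Sum.inr) := (Sum.elim_comp_inl_inr z).symm
    have hBH : fromBlocks A B Bᵀ D = fromBlocks A B Bᴴ D := by rw [myConjT]
    rw [dotProduct_mulVec, hBH, hz',
      schur_complement_eq₁₁ B D (z ∘ Sum.inl) (z ∘ Sum.inr) hA.1, hSchurT]
    by_cases hy : z ∘ Sum.inr = 0
    · have hx : z ∘ Sum.inl ≠ 0 := by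
        intro hx
        apply hz
        funext s
        cases s with
        | inl i => exact congrFun hx i
        | inr i => exact congrFun hy i
      rw [hy]
      simp only [Matrix.mulVec_zero, add_zero]
      have h1 := hA.dotProduct_mulVec_pos hx
      rw [dotProduct_mulVec] at h1
      simpa using h1
    · have h2 := hD.inv.dotProduct_mulVec_pos hy
      rw [dotProduct_mulVec] at h2
      have h1 : 0 ≤ star (z ∘ Sum.inl + (A⁻¹ * B) *ᵥ (z ∘ Sum.inr)) ᵥ* A ⬝ᵥ
          (z ∘ Sum.inl + (A⁻¹ * B) *ᵥ (z ∘ Sum.inr)) := by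
        have := hA.posSemidef.dotProduct_mulVec_nonneg (z ∘ Sum.inl + (A⁻¹ * B) *ᵥ (z ∘ Sum.inr))
        rwa [dotProduct_mulVec] at this
      linarith
  · rw [fromBlocks_transpose, hAsymm, hDsymm, transpose_transpose, fromBlocks_multiply,
      fromBlocks_multiply]
    simp only [Matrix.mul_one, Matrix.mul_zero, Matrix.zero_mul, Matrix.one_mul, add_zero,
      zero_add, Matrix.mul_neg, Matrix.neg_mul, neg_neg]
    have b1 : A * A + -(B * Bᵀ) = (1 : Matrix (Fin n) (Fin n) ℝ) := by rw [hA2]; abel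
    have b2 : A * B + -(B * D) = (0 : Matrix (Fin n) (Fin n) ℝ) := by rw [hABD]; abel
    have b3 : Bᵀ * A + -(D * Bᵀ) = (0 : Matrix (Fin n) (Fin n) ℝ) := by rw [hBtA]; abel
    have b4 : Bᵀ * B + -(D * D) = (-1 : Matrix (Fin n) (Fin n) ℝ) := by rw [hD2]; abel
    rw [b1, b2, b3, b4]
end

section
/- Let A be a real n×n positive definite matrix with A² - I positive semidefinite. Let Bᵀ be any real n×n matrix with BBᵀ = A² - I, and let D be the unique positive definite square root of I + BᵀB. Then AB = BD, and the block matrix X = [[A, B], [Bᵀ, D]] is positive definite and satisfies Xᵀ I_{n,n} X = I_{n,n}. -/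
open Matrix

private lemma ct_eq_tr' {m : Type*} [Fintype m] (M : Matrix m m ℝ) : Mᴴ = Mᵀ := by
  ext i j; simp [conjTranspose_apply]

private lemma trace_ct_mul_self_nonneg' {n : ℕ} (N : Matrix (Fin n) (Fin n) ℝ) :
    0 ≤ (Nᴴ * N).trace := by
  rw [Matrix.trace]
  refine Finset.sum_nonneg fun j _ => ?_
  simp only [Matrix.diag_apply, Matrix.mul_apply, conjTranspose_apply, star_trivial]
  exact Finset.sum_nonneg fun i _ => mul_self_nonneg _

private lemma aux_sylvester' {n : ℕ} (A D X : Matrix (Fin n) (Fin n) ℝ)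
    (hA : A.PosDef) (hD : D.PosDef) (h : A * X + X * D = 0) : X = 0 := by
  have htr : (Xᵀ * (A * X)).trace + (Xᵀ * (X * D)).trace = 0 := by
    rw [← trace_add, ← mul_add, h, mul_zero, trace_zero]
  obtain ⟨L, hL⟩ : ∃ L : Matrix (Fin n) (Fin n) ℝ, D = Lᴴ * L := by
    open scoped MatrixOrder in exact CStarAlgebra.nonneg_iff_eq_star_mul_self.mp hD.posSemidef.nonneg
  have h2 : 0 ≤ (Xᵀ * (X * D)).trace := by
    have e1 : Xᵀ * (X * D) = (Xᵀ * X * Lᴴ) * L := by rw [hL]; noncomm_ring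
    have e2 : L * (Xᵀ * X * Lᴴ) = (X * Lᴴ)ᴴ * (X * Lᴴ) := by
      rw [conjTranspose_mul, conjTranspose_conjTranspose, ct_eq_tr']; noncomm_ring
    rw [e1, trace_mul_comm, e2]
    exact trace_ct_mul_self_nonneg' _
  have hsum : (Xᵀ * (A * X)).trace = ∑ j, (fun i => X i j) ⬝ᵥ (A *ᵥ fun i => X i j) := by
    simp [Matrix.trace, Matrix.diag, Matrix.mul_apply, Matrix.mulVec, dotProduct]
  have hq : ∀ j ∈ Finset.univ, 0 ≤ (fun i => X i j) ⬝ᵥ (A *ᵥ fun i => X i j) := by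
    intro j _
    simpa using hA.posSemidef.dotProduct_mulVec_nonneg (fun i => X i j)
  have hzero : ∑ j, (fun i => X i j) ⬝ᵥ (A *ᵥ fun i => X i j) = 0 := by
    have h1 : 0 ≤ ∑ j, (fun i => X i j) ⬝ᵥ (A *ᵥ fun i => X i j) := Finset.sum_nonneg hq
    linarith [htr, hsum ▸ htr]
  have hcol : ∀ j, (fun i => X i j) = (0 : Fin n → ℝ) := by
    intro j
    by_contra hc
    have hpos := hA.dotProduct_mulVec_pos hc
    have := (Finset.sum_eq_zero_iff_of_nonneg hq).mp hzero j (Finset.mem_univ j)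
    simp only [star_trivial] at hpos
    linarith
  ext i j
  exact congrFun (hcol j) i

theorem stmt_8 {n : ℕ} (A B D : Matrix (Fin n) (Fin n) ℝ)
    (hA : A.PosDef) (hA2 : (A * A - 1).PosSemidef)
    (hB : B * Bᵀ = A * A - 1)
    (hD : D.PosDef) (hD2 : D * D = 1 + Bᵀ * B) :
    A * B = B * D ∧ (fromBlocks A B Bᵀ D).PosDef ∧
      (fromBlocks A B Bᵀ D)ᵀ * fromBlocks 1 0 0 (-1) * fromBlocks A B Bᵀ D =
        fromBlocks 1 0 0 (-1) := by
  have hAsym : Aᵀ = A := by rw [← ct_eq_tr']; exact hA.isHermitian.eq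
  have hDsym : Dᵀ = D := by rw [← ct_eq_tr']; exact hD.isHermitian.eq
  have hA2' : A * A = 1 + B * Bᵀ := by rw [hB]; abel
  have hsyl : A * (A * B - B * D) + (A * B - B * D) * D = 0 := by
    have e : A * (A * B - B * D) + (A * B - B * D) * D = (A * A) * B - B * (D * D) := by
      noncomm_ring
    rw [e, hA2', hD2]; noncomm_ring
  have hABD : A * B = B * D := sub_eq_zero.mp (aux_sylvester' A D _ hA hD hsyl)
  have h21 : Bᵀ * A = D * Bᵀ := by
    have := congrArg Matrix.transpose hABD
    simpa [Matrix.transpose_mul, hAsym, hDsym] using this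
  haveI := hA.isUnit.invertible
  haveI := hD.isUnit.invertible
  have hinv : A⁻¹ * B = B * D⁻¹ := by
    have e : B = A * (B * D⁻¹) := by
      rw [← Matrix.mul_assoc, hABD, Matrix.mul_assoc, Matrix.mul_inv_of_invertible,
        Matrix.mul_one]
    calc A⁻¹ * B = A⁻¹ * (A * (B * D⁻¹)) := by rw [← e]
      _ = B * D⁻¹ := by rw [Matrix.inv_mul_cancel_left_of_invertible]
  have hBtB : Bᵀ * B = D * D - 1 := by rw [hD2]; abel
  have hSchur : D - Bᵀ * A⁻¹ * B = D⁻¹ := by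
    rw [Matrix.mul_assoc, hinv, ← Matrix.mul_assoc, hBtB]
    have e : (D * D - 1) * D⁻¹ = D - D⁻¹ := by
      rw [Matrix.sub_mul, Matrix.mul_assoc, Matrix.mul_inv_of_invertible, Matrix.mul_one,
        Matrix.one_mul]
    rw [e]; abel
  have hBct : Bᴴ = Bᵀ := ct_eq_tr' B
  refine ⟨hABD, ?_, ?_⟩
  · rw [posDef_iff_dotProduct_mulVec]; constructor
    · show (fromBlocks A B Bᵀ D)ᴴ = fromBlocks A B Bᵀ D
      rw [ct_eq_tr', fromBlocks_transpose, hAsym, hDsym, transpose_transpose]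
    · intro x hx
      have hxe : Sum.elim (x ∘ Sum.inl) (x ∘ Sum.inr) = x := Sum.elim_comp_inl_inr x
      have key := schur_complement_eq₁₁ (A := A) B D (x ∘ Sum.inl) (x ∘ Sum.inr)
        hA.isHermitian
      rw [hBct, hSchur] at key
      rw [dotProduct_mulVec, ← hxe]
      rw [key]
      by_cases hy : (x ∘ Sum.inr) = 0
      · have hx1 : (x ∘ Sum.inl) ≠ 0 := by
          intro h0
          exact hx (by rw [← hxe, h0, hy]; ext (i | i) <;> rfl)
        have hu : x ∘ Sum.inl + (A⁻¹ * B) *ᵥ (x ∘ Sum.inr) = x ∘ Sum.inl := by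
          rw [hy, mulVec_zero, add_zero]
        rw [hu, hy]
        have t1 : 0 < star (x ∘ Sum.inl) ᵥ* A ⬝ᵥ (x ∘ Sum.inl) := by
          rw [← dotProduct_mulVec]; exact hA.dotProduct_mulVec_pos hx1
        simp only [star_zero, zero_dotProduct, vecMul_zero, dotProduct_zero, add_zero]
        exact t1
      · have t2 : 0 < star (x ∘ Sum.inr) ᵥ* D⁻¹ ⬝ᵥ (x ∘ Sum.inr) := by
          rw [← dotProduct_mulVec]; exact hD.inv.dotProduct_mulVec_pos hy
        have t1 : 0 ≤ star (x ∘ Sum.inl + (A⁻¹ * B) *ᵥ (x ∘ Sum.inr)) ᵥ* A ⬝ᵥ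
            (x ∘ Sum.inl + (A⁻¹ * B) *ᵥ (x ∘ Sum.inr)) := by
          rw [← dotProduct_mulVec]; exact hA.posSemidef.dotProduct_mulVec_nonneg _
        linarith
  · rw [fromBlocks_transpose, hAsym, hDsym, transpose_transpose, fromBlocks_multiply,
      fromBlocks_multiply]
    have e11 : A * A - B * Bᵀ = 1 := by rw [hB]; abel
    have e22 : Bᵀ * B - D * D = -1 := by rw [hD2]; abel
    simp only [Matrix.mul_one, Matrix.mul_zero, add_zero, zero_add, zero_sub, Matrix.mul_neg,
      Matrix.neg_mul, ← sub_eq_add_neg, e11, e22, hABD, h21, sub_self]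
end

section
/- Let A, B, D be real n×n matrices with A positive definite, D positive definite, A² = I + BBᵀ, and D² = I + BᵀB. Then A²B = BD² implies AB = BD. -/
open Matrix
open scoped MatrixOrder

lemma trace_transpose_mul_self_nonneg {n : ℕ} (X : Matrix (Fin n) (Fin n) ℝ) :
    0 ≤ (Xᴴ * X).trace := by
  rw [Matrix.trace]
  refine Finset.sum_nonneg fun j _ => ?_
  simp only [Matrix.diag_apply, Matrix.mul_apply, Matrix.conjTranspose_apply, star_trivial]
  exact Finset.sum_nonneg fun i _ => mul_self_nonneg _

lemma eq_zero_of_trace_transpose_mul_self {n : ℕ} (X : Matrix (Fin n) (Fin n) ℝ)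
    (h : (Xᴴ * X).trace = 0) : X = 0 := by
  rw [Matrix.trace] at h
  have h2 : ∀ j ∈ Finset.univ, (Xᴴ * X).diag j = 0 := by
    refine (Finset.sum_eq_zero_iff_of_nonneg fun j _ => ?_).mp h
    simp only [Matrix.diag_apply, Matrix.mul_apply, Matrix.conjTranspose_apply, star_trivial]
    exact Finset.sum_nonneg fun i _ => mul_self_nonneg _
  ext i j
  have := h2 j (Finset.mem_univ j)
  simp only [Matrix.diag_apply, Matrix.mul_apply, Matrix.conjTranspose_apply, star_trivial] at this
  have := (Finset.sum_eq_zero_iff_of_nonneg fun i _ => mul_self_nonneg (X i j)).mp this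
    i (Finset.mem_univ i)
  simpa [mul_self_eq_zero] using this

theorem stmt_9 {n : ℕ} (A B D : Matrix (Fin n) (Fin n) ℝ)
    (hA : A.PosDef) (hD : D.PosDef)
    (hA2 : A * A = 1 + B * Bᵀ) (hD2 : D * D = 1 + Bᵀ * B)
    (h : A * A * B = B * (D * D)) :
    A * B = B * D := by
  set M := A * B - B * D with hM
  -- key: A * M + M * D = 0
  have hkey : A * M + M * D = 0 := by
    have e : A * M + M * D = A * A * B - B * (D * D) := by rw [hM]; noncomm_ring
    rw [e, h, sub_self]
  set S := CFC.sqrt A with hS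
  set T := CFC.sqrt D with hT
  have hSH : Sᴴ = S := (CFC.sqrt_nonneg A).posSemidef.1
  have hTH : Tᴴ = T := (CFC.sqrt_nonneg D).posSemidef.1
  have hSS : S * S = A := CFC.sqrt_mul_sqrt_self A hA.posSemidef.nonneg
  have hTT : T * T = D := CFC.sqrt_mul_sqrt_self D hD.posSemidef.nonneg
  clear_value S T
  clear_value M
  -- traces
  have htr : ((S * M)ᴴ * (S * M)).trace + ((M * T)ᴴ * (M * T)).trace = 0 := by
    have e1 : (S * M)ᴴ * (S * M) = Mᴴ * (A * M) := by
      rw [Matrix.conjTranspose_mul, hSH, Matrix.mul_assoc, ← Matrix.mul_assoc S S M, hSS]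
    have e2 : ((M * T)ᴴ * (M * T)).trace = (Mᴴ * (M * D)).trace := by
      rw [Matrix.conjTranspose_mul, hTH]
      rw [show T * Mᴴ * (M * T) = (T * Mᴴ * M) * T by noncomm_ring, Matrix.trace_mul_comm,
        show T * (T * Mᴴ * M) = (T * T) * (Mᴴ * M) by noncomm_ring, Matrix.trace_mul_comm,
        show Mᴴ * M * (T * T) = Mᴴ * (M * (T * T)) by noncomm_ring, hTT]
    rw [e1, e2, ← Matrix.trace_add, ← Matrix.mul_add, hkey, Matrix.mul_zero, Matrix.trace_zero]
  have h1 : ((S * M)ᴴ * (S * M)).trace = 0 := by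
    have := trace_transpose_mul_self_nonneg (S * M)
    have := trace_transpose_mul_self_nonneg (M * T)
    linarith
  have hSM : S * M = 0 := eq_zero_of_trace_transpose_mul_self _ h1
  have hAM : A * M = 0 := by rw [← hSS, Matrix.mul_assoc, hSM, Matrix.mul_zero]
  have hMz : M = 0 := by
    have hinv := hA.isUnit.invertible
    calc M = A⁻¹ * (A * M) := by rw [← Matrix.mul_assoc, Matrix.inv_mul_of_invertible, Matrix.one_mul]
    _ = 0 := by rw [hAM, Matrix.mul_zero]
  have := sub_eq_zero.mp (hM ▸ hMz)
  exact this
end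

section
/- Every positive definite matrix P in G_{I_{n,n}} = {X : Xᵀ I_{n,n} X = I_{n,n}} is the matrix exponential of a real symmetric matrix of the form [[0, X], [Xᵀ, 0]]. In particular, P lies in the connected component of the identity of G_{I_{n,n}}. -/
open Matrix

open scoped Matrix.Norms.L2Operator MatrixOrder in
/-- Every positive definite real matrix has a unique symmetric logarithm. -/
theorem exp_log_posdef_aux {m : Type*} [Fintype m] [DecidableEq m]
    (P : Matrix m m ℝ) (hP : P.PosDef) :
    ∃ S : Matrix m m ℝ, Sᵀ = S ∧ NormedSpace.exp S = P ∧
      ∀ B : Matrix m m ℝ, Bᵀ = B → NormedSpace.exp B = P → B = S := by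
  have hsa : IsSelfAdjoint P := hP.isHermitian
  have hspec : ∀ x ∈ spectrum ℝ P, 0 < x := by
    intro x hx
    rw [hP.isHermitian.spectrum_real_eq_range_eigenvalues] at hx
    obtain ⟨i, rfl⟩ := hx
    exact hP.eigenvalues_pos i
  refine ⟨CFC.log P, ?_, CFC.exp_log P hP.isStrictlyPositive, ?_⟩
  · have h : IsSelfAdjoint (CFC.log P) := cfc_predicate _ _
    rw [_root_.IsSelfAdjoint, Matrix.star_eq_conjTranspose,
      Matrix.conjTranspose_eq_transpose_of_trivial] at h
    exact h
  · intro B hB hBP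
    have hBsa : IsSelfAdjoint B := by
      rw [_root_.IsSelfAdjoint, Matrix.star_eq_conjTranspose,
        Matrix.conjTranspose_eq_transpose_of_trivial]
      exact hB
    rw [← hBP, CFC.log_exp B hBsa]

theorem stmt_10 {n : ℕ} (P : Matrix (Fin n ⊕ Fin n) (Fin n ⊕ Fin n) ℝ)
    (hP : P.PosDef)
    (hG : Pᵀ * fromBlocks 1 0 0 (-1) * P = fromBlocks 1 0 0 (-1)) :
    (∃ X : Matrix (Fin n) (Fin n) ℝ,
        P = NormedSpace.exp (fromBlocks 0 X Xᵀ 0)) ∧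
    P ∈ connectedComponentIn
        {Y : Matrix (Fin n ⊕ Fin n) (Fin n ⊕ Fin n) ℝ |
          Yᵀ * fromBlocks 1 0 0 (-1) * Y = fromBlocks 1 0 0 (-1)} 1 := by
  classical
  set J : Matrix (Fin n ⊕ Fin n) (Fin n ⊕ Fin n) ℝ := fromBlocks 1 0 0 (-1) with hJ
  have hJJ : J * J = 1 := by
    simp [hJ, Matrix.fromBlocks_multiply, ← Matrix.fromBlocks_one]
  have hJt : Jᵀ = J := by
    simp [hJ, Matrix.fromBlocks_transpose, Matrix.transpose_one]
  have hJunit : IsUnit J := ⟨⟨J, J, hJJ, hJJ⟩, rfl⟩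
  have hJinv : J⁻¹ = J := Matrix.inv_eq_right_inv hJJ
  have hPt : Pᵀ = P := by
    have h := hP.isHermitian
    rwa [Matrix.IsHermitian, Matrix.conjTranspose_eq_transpose_of_trivial] at h
  obtain ⟨S, hSt, hSexp, huniq⟩ := exp_log_posdef_aux P hP
  -- P⁻¹ = J * P * J
  have hPJP : P * (J * P * J) = 1 := by
    have h1 : P * J * P = J := by rw [hPt] at hG; exact hG
    calc P * (J * P * J) = (P * J * P) * J := by simp only [mul_assoc]
      _ = J * J := by rw [h1]
      _ = 1 := hJJ
  have hPinv : P⁻¹ = J * P * J := Matrix.inv_eq_right_inv hPJP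
  -- J * S * J = -S
  have hconj : NormedSpace.exp (J * S * J) = J * P * J := by
    have h := Matrix.exp_conj J S hJunit
    rw [hJinv] at h
    rw [h, hSexp]
  have hneg : NormedSpace.exp (-(J * S * J)) = P := by
    rw [Matrix.exp_neg, hconj, ← hPinv,
      Matrix.nonsing_inv_nonsing_inv _ hP.det_pos.ne'.isUnit]
  have hsym : (-(J * S * J))ᵀ = -(J * S * J) := by
    simp only [Matrix.transpose_neg, Matrix.transpose_mul, hJt, hSt]
    rw [mul_assoc]
  have hJSJ : -(J * S * J) = S := huniq _ hsym hneg
  have hJSJ' : J * S * J = -S := neg_eq_iff_eq_neg.mp hJSJ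
  -- block structure of S
  set A := S.toBlocks₁₁ with hA
  set X := S.toBlocks₁₂ with hX
  set C := S.toBlocks₂₁ with hC
  set D := S.toBlocks₂₂ with hD
  have hSblocks : S = fromBlocks A X C D := (fromBlocks_toBlocks S).symm
  have hmul : J * S * J = fromBlocks A (-X) (-C) D := by
    rw [hSblocks, hJ]
    simp [Matrix.fromBlocks_multiply]
  have heq : fromBlocks A (-X) (-C) D = fromBlocks (-A) (-X) (-C) (-D) := by
    rw [← hmul, hJSJ', hSblocks, Matrix.fromBlocks_neg]
  have hA0 : A = 0 := by
    have h := congrArg Matrix.toBlocks₁₁ heq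
    simp only [Matrix.toBlocks_fromBlocks₁₁] at h
    ext i j
    have h2 := congrFun (congrFun h i) j
    simp only [Matrix.neg_apply, Matrix.zero_apply] at h2 ⊢
    linarith
  have hD0 : D = 0 := by
    have h := congrArg Matrix.toBlocks₂₂ heq
    simp only [Matrix.toBlocks_fromBlocks₂₂] at h
    ext i j
    have h2 := congrFun (congrFun h i) j
    simp only [Matrix.neg_apply, Matrix.zero_apply] at h2 ⊢
    linarith
  have hCX : Xᵀ = C := by
    have h := hSt
    rw [hSblocks, Matrix.fromBlocks_transpose] at h
    exact congrArg Matrix.toBlocks₂₁ h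
  have hSform : S = fromBlocks 0 X Xᵀ 0 := by
    rw [hSblocks, hA0, hD0, hCX]
  constructor
  · exact ⟨X, by rw [← hSform, hSexp]⟩
  · -- path t ↦ exp (t • S)
    set f : ℝ → Matrix (Fin n ⊕ Fin n) (Fin n ⊕ Fin n) ℝ :=
      fun t => NormedSpace.exp (t • S) with hf
    have hf0 : f 0 = 1 := by simp [hf, NormedSpace.exp_zero]
    have hf1 : f 1 = P := by simp [hf, hSexp]
    have hmem : ∀ t : ℝ, (f t)ᵀ * J * f t = J := by
      intro t
      have h1 : (f t)ᵀ = f t := by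
        rw [hf, ← Matrix.exp_transpose, Matrix.transpose_smul, hSt]
      have hJSJt : J * (t • S) * J = -(t • S) := by
        rw [Matrix.mul_smul, Matrix.smul_mul, hJSJ', smul_neg]
      have hconjt : J * f t * J = NormedSpace.exp (-(t • S)) := by
        have h := Matrix.exp_conj J (t • S) hJunit
        rw [hJinv, hJSJt] at h
        exact h.symm
      have hinv : f t * NormedSpace.exp (-(t • S)) = 1 := by
        rw [hf]
        rw [← Matrix.exp_add_of_commute _ _ ((Commute.refl (t • S)).neg_right),
          add_neg_cancel, NormedSpace.exp_zero]
      have hJe : J * f t = NormedSpace.exp (-(t • S)) * J := by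
        calc J * f t = (J * f t * J) * J := by rw [mul_assoc, hJJ, mul_one]
          _ = NormedSpace.exp (-(t • S)) * J := by rw [hconjt]
      rw [h1, mul_assoc, hJe, ← mul_assoc, hinv, one_mul]
    have hcont : Continuous f := by
      letI : NormedRing (Matrix (Fin n ⊕ Fin n) (Fin n ⊕ Fin n) ℝ) :=
        Matrix.linftyOpNormedRing
      letI : NormedAlgebra ℝ (Matrix (Fin n ⊕ Fin n) (Fin n ⊕ Fin n) ℝ) :=
        Matrix.linftyOpNormedAlgebra
      letI : NormedAlgebra ℚ (Matrix (Fin n ⊕ Fin n) (Fin n ⊕ Fin n) ℝ) :=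
        NormedAlgebra.restrictScalars ℚ ℝ _
      exact NormedSpace.exp_continuous.comp (continuous_id.smul continuous_const)
    have hpre : IsPreconnected (f '' Set.Icc (0:ℝ) 1) :=
      isPreconnected_Icc.image f hcont.continuousOn
    have hsub : f '' Set.Icc (0:ℝ) 1 ⊆
        {Y : Matrix (Fin n ⊕ Fin n) (Fin n ⊕ Fin n) ℝ | Yᵀ * J * Y = J} := by
      rintro - ⟨t, -, rfl⟩
      exact hmem t
    have h1mem : (1 : Matrix (Fin n ⊕ Fin n) (Fin n ⊕ Fin n) ℝ) ∈
        f '' Set.Icc (0:ℝ) 1 :=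
      ⟨0, ⟨le_refl 0, zero_le_one⟩, hf0⟩
    exact hpre.subset_connectedComponentIn h1mem hsub
      ⟨1, ⟨zero_le_one, le_refl 1⟩, hf1⟩
end

section
/- Let K_{2n} = [[0, I_n], [I_n, 0]] and let X = [[A, B], [Bᵀ, D]] be a real symmetric 2n×2n matrix with Xᵀ K_{2n} X = K_{2n}, equivalently BA and DB are antisymmetric and B² = I - AD. If A and D are positive definite then X is positive definite; in particular the Schur complement D - Bᵀ A⁻¹ B equals A⁻¹. -/
open Matrix

theorem stmt_13 {n : ℕ} (A B D : Matrix (Fin n) (Fin n) ℝ)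
    (hA : A.IsSymm) (hD : D.IsSymm)
    (hX : (fromBlocks A B Bᵀ D)ᵀ * fromBlocks 0 1 1 0 * fromBlocks A B Bᵀ D =
      fromBlocks 0 1 1 0)
    (hApd : A.PosDef) (hDpd : D.PosDef) :
    (fromBlocks A B Bᵀ D).PosDef ∧ D - Bᵀ * A⁻¹ * B = A⁻¹ := by
  have hinvA : Invertible A := hApd.isUnit.invertible
  rw [fromBlocks_transpose, hA.eq, hD.eq, transpose_transpose,
    fromBlocks_multiply, fromBlocks_multiply] at hX
  simp only [Matrix.mul_zero, Matrix.mul_one, zero_add, add_zero] at hX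
  rw [fromBlocks_inj] at hX
  obtain ⟨h11, h12, h21, h22⟩ := hX
  have hBB : B * B = 1 - A * D := by
    rw [eq_sub_iff_add_eq]; exact h12
  have hBt : Bᵀ = -(A⁻¹ * B * A) := by
    have h := congrArg (fun M => A⁻¹ * M) h11
    simp only [Matrix.mul_add, ← Matrix.mul_assoc, Matrix.mul_zero,
      Matrix.inv_mul_of_invertible, Matrix.one_mul] at h
    exact eq_neg_of_add_eq_zero_right h
  have schur : D - Bᵀ * A⁻¹ * B = A⁻¹ := by
    have key : Bᵀ * A⁻¹ * B = -(A⁻¹ * (B * B)) := by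
      rw [hBt]
      simp only [Matrix.neg_mul, neg_inj]
      rw [Matrix.mul_assoc (A⁻¹ * B) A A⁻¹, Matrix.mul_inv_of_invertible,
        Matrix.mul_one, Matrix.mul_assoc]
    rw [key, hBB, sub_neg_eq_add, Matrix.mul_sub, Matrix.mul_one,
      Matrix.inv_mul_cancel_left_of_invertible]
    abel
  refine ⟨?_, schur⟩
  have hBH : Bᴴ = Bᵀ := conjTranspose_eq_transpose_of_trivial B
  have hSpd : (D - Bᴴ * A⁻¹ * B).PosDef := by rw [hBH, schur]; exact hApd.inv
  rw [posDef_iff_dotProduct_mulVec]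
  constructor
  · rw [← hBH]
    exact isHermitian_fromBlocks_iff.2
      ⟨hApd.1, rfl, by rw [conjTranspose_conjTranspose], hDpd.1⟩
  · intro x hx
    rw [← hBH, dotProduct_mulVec, ← Sum.elim_comp_inl_inr x,
      schur_complement_eq₁₁ B D _ _ hApd.1]
    by_cases h2 : x ∘ Sum.inr = 0
    · have h1 : x ∘ Sum.inl ≠ 0 := by
        intro h1
        apply hx
        ext (i | i)
        · exact congrFun h1 i
        · exact congrFun h2 i
      simp only [h2, Matrix.mulVec_zero, add_zero, star_zero, Matrix.zero_vecMul,
        zero_dotProduct]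
      rw [← dotProduct_mulVec]
      exact hApd.dotProduct_mulVec_pos h1
    · have t1 : 0 ≤ star (x ∘ Sum.inl + (A⁻¹ * B) *ᵥ (x ∘ Sum.inr)) ᵥ* A ⬝ᵥ
          (x ∘ Sum.inl + (A⁻¹ * B) *ᵥ (x ∘ Sum.inr)) := by
        rw [← dotProduct_mulVec]
        exact hApd.posSemidef.dotProduct_mulVec_nonneg _
      have t2 : 0 < star (x ∘ Sum.inr) ᵥ* (D - Bᴴ * A⁻¹ * B) ⬝ᵥ (x ∘ Sum.inr) := by
        rw [← dotProduct_mulVec]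
        exact hSpd.dotProduct_mulVec_pos h2
      linarith
end

section
/- Let G ∈ SL(2,ℂ) be Hermitian positive definite. Then Φ(G), the image under the covering map SL(2,ℂ) → SO⁺(1,3,ℝ), is a real symmetric positive definite 4×4 matrix. -/
open Matrix Complex

/-- The basis `{I₂, σ_x, σ_y, σ_z}` of the real space of 2×2 Hermitian matrices. -/
noncomputable def pauli : Fin 4 → Matrix (Fin 2) (Fin 2) ℂ :=
  ![1, !![0, 1; 1, 0], !![0, -Complex.I; Complex.I, 0], !![1, 0; 0, -1]]

/-- The covering map `SL(2,ℂ) → SO⁺(1,3,ℝ)`: `Φ(G)` is the matrix of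
`X ↦ G X G*` on Hermitian 2×2 matrices w.r.t. the basis `{I₂, σ_x, σ_y, σ_z}`,
whose entries are extracted using the trace inner product. -/
noncomputable def Phi (G : Matrix (Fin 2) (Fin 2) ℂ) : Matrix (Fin 4) (Fin 4) ℝ :=
  Matrix.of fun i j => ((pauli i * (G * pauli j * Gᴴ)).trace.re) / 2

lemma disc_nonneg' (a d p q s r u m : ℝ) (ha : 0 < a) (hd : 0 < d)
    (h : a*d = 1 + p^2 + q^2) :
    4*(s*r - u^2 - m^2) ≤ (s*a + r*d + 2*(u*p + m*q))^2 := by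
  rcases eq_or_lt_of_le (by positivity : (0:ℝ) ≤ p^2 + q^2) with hP | hP
  · have hp : p = 0 := by nlinarith [sq_nonneg p, sq_nonneg q]
    have hq : q = 0 := by nlinarith [sq_nonneg p, sq_nonneg q]
    subst hp; subst hq
    have had : a*d = 1 := by linarith [h]
    have h3 : (s*a)*(r*d) = s*r := by linear_combination (s*r) * had
    nlinarith [sq_nonneg (s*a - r*d), h3, sq_nonneg u, sq_nonneg m]
  · have key : ((s*a+r*d+2*(u*p+m*q))^2 - 4*(s*r-u^2-m^2)) * ((p^2+q^2)*(a*d))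
        = ((p^2+q^2)*(s*a+r*d) + 2*(u*p+m*q)*(a*d))^2
          + (p^2+q^2)*(s*a-r*d)^2 + 4*(a*d)*(u*q-m*p)^2 := by
      linear_combination ((p^2+q^2)*(s*a+r*d)^2 - 4*(a*d)*(u*p+m*q)^2) * h
    nlinarith [key, mul_pos hP (mul_pos ha hd),
      sq_nonneg ((p^2+q^2)*(s*a+r*d) + 2*(u*p+m*q)*(a*d)),
      mul_nonneg hP.le (sq_nonneg (s*a - r*d)),
      mul_nonneg (mul_pos ha hd).le (sq_nonneg (u*q - m*p))]

lemma T_pos' (a d p q s r u m : ℝ) (ha : 0 < a) (hd : 0 < d)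
    (h : a*d = 1 + p^2 + q^2) (hs : 0 ≤ s) (hr : 0 ≤ r) (hsr : 0 < s + r)
    (hD : 0 ≤ s*r - u^2 - m^2) :
    0 < s*a + r*d + 2*(u*p + m*q) := by
  have h3 : (s*a)*(r*d) = s*r*(1 + p^2 + q^2) := by linear_combination (s*r) * h
  have hpos : 0 < s*a + r*d := by
    rcases lt_or_ge s 0 with h'|h'
    · linarith
    · rcases lt_or_ge r 0 with h''|h''
      · linarith
      · have h1 : 0 ≤ s*a := mul_nonneg h' ha.le
        have h2 : 0 ≤ r*d := mul_nonneg h'' hd.le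
        rcases eq_or_lt_of_le h' with hh|hh
        · have : 0 < r := by linarith
          have := mul_pos this hd; nlinarith
        · have := mul_pos hh ha; nlinarith
  rcases eq_or_lt_of_le (by positivity : (0:ℝ) ≤ u^2 + m^2) with hU|hU
  · have hu : u = 0 := by nlinarith [sq_nonneg u, sq_nonneg m]
    have hm : m = 0 := by nlinarith [sq_nonneg u, sq_nonneg m]
    subst hu; subst hm; simpa using hpos
  · have h5 : (2*(u*p+m*q))^2 < (s*a+r*d)^2 := by
      nlinarith [sq_nonneg (u*q - m*p),
        mul_nonneg hD (by positivity : (0:ℝ) ≤ p^2+q^2),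
        h3, sq_nonneg (s*a - r*d), hD, hU]
    by_contra hT
    push_neg at hT
    have h6 : s*a + r*d ≤ -(2*(u*p+m*q)) := by linarith
    have := mul_self_le_mul_self hpos.le h6
    nlinarith [h5]

lemma quad_pos' (a d p q s r u m : ℝ) (ha : 0 < a) (hd : 0 < d)
    (h : a*d = 1 + p^2 + q^2) (hne : ¬ (s = 0 ∧ r = 0 ∧ u = 0 ∧ m = 0)) :
    0 < (s*a + r*d + 2*(u*p + m*q))^2 - 2*(s*r - u^2 - m^2) := by
  rcases lt_or_ge (s*r - u^2 - m^2) 0 with hD | hD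
  · nlinarith [sq_nonneg (s*a + r*d + 2*(u*p + m*q))]
  · have hsr : 0 ≤ s*r := by nlinarith [sq_nonneg u, sq_nonneg m]
    rcases lt_trichotomy (s + r) 0 with hS | hS | hS
    · have hs : s ≤ 0 := by nlinarith
      have hr : r ≤ 0 := by nlinarith
      have hT := T_pos' a d p q (-s) (-r) (-u) (-m) ha hd h (by linarith) (by linarith)
        (by linarith) (by nlinarith)
      have hA := disc_nonneg' a d p q (-s) (-r) (-u) (-m) ha hd h
      nlinarith [hT, hA, mul_pos hT hT]
    · have hs : s = 0 := by nlinarith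
      have hr : r = 0 := by linarith
      have hu : u = 0 := by nlinarith [sq_nonneg u, sq_nonneg m]
      have hm : m = 0 := by nlinarith [sq_nonneg u, sq_nonneg m]
      exact absurd ⟨hs, hr, hu, hm⟩ hne
    · have hs : 0 ≤ s := by nlinarith
      have hr : 0 ≤ r := by nlinarith
      have hT := T_pos' a d p q s r u m ha hd h hs hr hS hD
      have hA := disc_nonneg' a d p q s r u m ha hd h
      nlinarith [hT, hA, mul_pos hT hT]

lemma herm_rep (G : Matrix (Fin 2) (Fin 2) ℂ) (hHerm : G.IsHermitian) :
    G = !![((G 0 0).re : ℂ), (G 0 1).re + (G 0 1).im * Complex.I;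
           (G 0 1).re - (G 0 1).im * Complex.I, ((G 1 1).re : ℂ)] := by
  have h00 := congrFun (congrFun hHerm 0) 0
  have h11 := congrFun (congrFun hHerm 1) 1
  have h10 := congrFun (congrFun hHerm 1) 0
  simp [Matrix.conjTranspose_apply] at h00 h11 h10
  ext i j
  fin_cases i <;> fin_cases j <;>
    simp_all [Complex.ext_iff] <;> linarith

set_option maxHeartbeats 2000000 in
lemma Phi_quadform (a p q d : ℝ) (hdet : a*d - p^2 - q^2 = 1) (x : Fin 4 → ℝ) :
    x ⬝ᵥ (Phi !![(a:ℂ), p+q*Complex.I; p - q*Complex.I, (d:ℂ)]).mulVec x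
    = (((x 0 + x 3)*a + (x 0 - x 3)*d + 2*((x 1)*p + (-(x 2))*q))^2
        - 2*((x 0 + x 3)*(x 0 - x 3) - (x 1)^2 - (-(x 2))^2)) / 2 := by
  have h32 : (Fin.succ 2 : Fin 4) = 3 := rfl
  simp only [dotProduct, Matrix.mulVec, Fin.sum_univ_succ, Fin.sum_univ_zero]
  simp [Phi, pauli, Matrix.trace, Matrix.mul_apply,
    Fin.sum_univ_succ, Matrix.conjTranspose_apply, Matrix.vecMul, Matrix.vecHead,
    Matrix.vecTail, h32]
  linear_combination (x 1^2 + x 2^2 + x 3^2 - x 0^2) * hdet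

set_option maxHeartbeats 2000000 in
lemma Phi_isSymm (a p q d : ℝ) :
    (Phi !![(a:ℂ), p+q*Complex.I; p - q*Complex.I, (d:ℂ)]).IsSymm := by
  rw [Matrix.IsSymm]
  ext i j
  fin_cases i <;> fin_cases j <;>
    simp [Phi, pauli, Matrix.trace, Matrix.mul_apply, Fin.sum_univ_succ,
      Matrix.conjTranspose_apply, Matrix.vecMul, Matrix.vecHead, Matrix.vecTail,
      Matrix.transpose_apply] <;> ring

theorem stmt_15 (G : Matrix (Fin 2) (Fin 2) ℂ)
    (hHerm : G.IsHermitian)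
    (hPos : ∀ x : Fin 2 → ℂ, x ≠ 0 → 0 < (star x ⬝ᵥ G.mulVec x).re)
    (hdet : G.det = 1) :
    (Phi G).IsSymm ∧ (Phi G).PosDef := by
  set a := (G 0 0).re with ha_def
  set p := (G 0 1).re with hp_def
  set q := (G 0 1).im with hq_def
  set d := (G 1 1).re with hd_def
  have hG := herm_rep G hHerm
  have ha : 0 < a := by
    have h1 := hPos ![1, 0] (by
      intro h; have := congrFun h 0; simp at this)
    simpa [dotProduct, Matrix.mulVec, Fin.sum_univ_two] using h1
  have hd : 0 < d := by
    have h1 := hPos ![0, 1] (by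
      intro h; have := congrFun h 1; simp at this)
    simpa [dotProduct, Matrix.mulVec, Fin.sum_univ_two] using h1
  have hdet' : a*d - p^2 - q^2 = 1 := by
    rw [Matrix.det_fin_two, hG] at hdet
    have := congrArg Complex.re hdet
    simp [Complex.ext_iff] at this
    nlinarith [this]
  refine ⟨by rw [hG]; exact Phi_isSymm a p q d, Matrix.posDef_iff_dotProduct_mulVec.mpr ⟨?_, ?_⟩⟩
  · rw [Matrix.IsHermitian, Matrix.conjTranspose_eq_transpose_of_trivial, hG]
    exact Phi_isSymm a p q d
  · intro x hx
    have hstar : star x = x := by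
      funext i; simp
    rw [hstar, hG, Phi_quadform a p q d hdet' x]
    have hne : ¬ ((x 0 + x 3) = 0 ∧ (x 0 - x 3) = 0 ∧ x 1 = 0 ∧ (-(x 2)) = 0) := by
      rintro ⟨h1, h2, h3, h4⟩
      apply hx
      have e0 : x 0 = 0 := by linarith
      have e1 : x 1 = 0 := h3
      have e2 : x 2 = 0 := by linarith
      have e3 : x 3 = 0 := by linarith
      funext i
      fin_cases i <;> first | exact e0 | exact e1 | exact e2 | exact e3
    have := quad_pos' a d p q (x 0 + x 3) (x 0 - x 3) (x 1) (-(x 2)) ha hd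
      (by linarith) hne
    linarith
end

section
/- Let A and B be positive definite matrices in SL(2,ℝ) and let Φ(A,B) ∈ SO⁺(2,2,ℝ) be the image under the covering map SL(2,ℝ)×SL(2,ℝ) → SO⁺(2,2,ℝ) given by conjugation X ↦ CXC⁻¹ of the concentric embedding C of (A,B) acting on the 4-dimensional space spanned by {σ_z⊗σ_x, σ_x⊗I₂, σ_z⊗iσ_y, iσ_y⊗I₂}. Then Φ(A,B) is positive definite. -/
open Matrix

/-- The real basis `{σ_z⊗σ_x, σ_x⊗I₂, σ_z⊗iσ_y, iσ_y⊗I₂}` of the 4-dimensional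
space on which the concentric embedding acts by conjugation. -/
def EBasis : Fin 4 → Matrix (Fin 4) (Fin 4) ℝ :=
  ![!![0,1,0,0; 1,0,0,0; 0,0,0,-1; 0,0,-1,0],
    !![0,0,1,0; 0,0,0,1; 1,0,0,0; 0,1,0,0],
    !![0,1,0,0; -1,0,0,0; 0,0,0,-1; 0,0,1,0],
    !![0,0,1,0; 0,0,0,1; -1,0,0,0; 0,-1,0,0]]

/-- The concentric embedding of a pair `(A, B)` of 2×2 matrices into `M(4,ℝ)`. -/
def concentric (A B : Matrix (Fin 2) (Fin 2) ℝ) : Matrix (Fin 4) (Fin 4) ℝ :=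
  !![A 0 0, 0, 0, A 0 1;
     0, B 0 0, B 0 1, 0;
     0, B 1 0, B 1 1, 0;
     A 1 0, 0, 0, A 1 1]

/-- The covering map `SL(2,ℝ) × SL(2,ℝ) → SO⁺(2,2,ℝ)`: the matrix of
`X ↦ C X C⁻¹` (where `C` is the concentric embedding of `(A, B)`) with respect
to the basis `EBasis`, with coefficients extracted via the trace form. -/
noncomputable def Phi22 (A B : Matrix (Fin 2) (Fin 2) ℝ) : Matrix (Fin 4) (Fin 4) ℝ :=
  Matrix.of fun i j =>
    ((EBasis i)ᵀ * (concentric A B * EBasis j * (concentric A B)⁻¹)).trace / 4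

set_option maxHeartbeats 1000000 in
private lemma key_ineq (a b d p q s u v U V : ℝ) (ha : 0 < a) (hd : 0 < d) (hp : 0 < p)
    (hs : 0 < s) (hA : a * d = 1 + b ^ 2) (hB : p * s = 1 + q ^ 2)
    (hx : u ≠ 0 ∨ v ≠ 0 ∨ U ≠ 0 ∨ V ≠ 0) :
    0 < d * (p*u^2 + 2*q*u*v + s*v^2) + a * (s*U^2 - 2*q*U*V + p*V^2)
      + 2 * b * (U*(q*u + s*v) - V*(p*u + q*v)) := by
  set L := p*u^2 + 2*q*u*v + s*v^2 with hL
  set R := s*U^2 - 2*q*U*V + p*V^2 with hR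
  set t := U*(q*u + s*v) - V*(p*u + q*v) with ht
  have hL0 : 0 ≤ L := by nlinarith [sq_nonneg (p*u + q*v), sq_nonneg v]
  have hR0 : 0 ≤ R := by nlinarith [sq_nonneg (s*U - q*V), sq_nonneg V]
  have hLR : L * R = (U*u + V*v)^2 + t^2 := by
    rw [hL, hR, ht]; linear_combination ((U*u + V*v)^2) * hB
  have hX : 0 < d * L + a * R := by
    have hcase : 0 < L ∨ 0 < R := by
      rcases hx with h | h | h | h
      · left
        rcases eq_or_ne v 0 with hv | hv
        · rw [hL, hv]
          nlinarith [mul_pos (mul_pos hp (mul_self_pos.mpr h)) hp, sq_nonneg u, mul_pos hp hp]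
        · nlinarith [sq_nonneg (p*u + q*v), mul_self_pos.mpr hv]
      · left
        nlinarith [sq_nonneg (p*u + q*v), mul_self_pos.mpr h]
      · right
        rcases eq_or_ne V 0 with hV | hV
        · rw [hR, hV]; nlinarith [mul_pos (mul_pos hs (mul_self_pos.mpr h)) hs]
        · nlinarith [sq_nonneg (s*U - q*V), mul_self_pos.mpr hV]
      · right
        nlinarith [sq_nonneg (s*U - q*V), mul_self_pos.mpr h]
    rcases hcase with h | h
    · have := mul_pos hd h
      nlinarith [mul_nonneg ha.le hR0]
    · have := mul_pos ha h
      nlinarith [mul_nonneg hd.le hL0]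
  have hadLR : a * d * (L * R) = (1 + b^2) * ((U*u + V*v)^2 + t^2) := by
    rw [hLR, hA]
  have h2 : (d * L + a * R)^2 ≥ 4*b^2*t^2 + 4*t^2 := by
    nlinarith [sq_nonneg (d*L - a*R), sq_nonneg (U*u + V*v), sq_nonneg (b*(U*u + V*v))]
  rcases eq_or_ne t 0 with ht0 | ht0
  · rw [ht0]; linarith
  · have ht2 : 0 < t^2 := by positivity
    nlinarith [hX, h2, sq_nonneg (d*L + a*R + 2*b*t)]

set_option maxHeartbeats 2000000 in
theorem stmt_17 (A B : Matrix (Fin 2) (Fin 2) ℝ)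
    (hA : A.PosDef) (hB : B.PosDef)
    (hdA : A.det = 1) (hdB : B.det = 1) :
    (Phi22 A B).PosDef := by
  have hAsym : A 1 0 = A 0 1 := by
    have h := congrFun (congrFun hA.1 0) 1
    simp [Matrix.conjTranspose_apply] at h
    linarith
  have hBsym : B 1 0 = B 0 1 := by
    have h := congrFun (congrFun hB.1 0) 1
    simp [Matrix.conjTranspose_apply] at h
    linarith
  have hdA2 : A 0 0 * A 1 1 - A 0 1 * A 0 1 = 1 := by
    rw [Matrix.det_fin_two, hAsym] at hdA; exact hdA
  have hdB2 : B 0 0 * B 1 1 - B 0 1 * B 0 1 = 1 := by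
    rw [Matrix.det_fin_two, hBsym] at hdB; exact hdB
  have ha : 0 < A 0 0 := by
    have := hA.dotProduct_mulVec_pos (x := (Pi.single 0 1)) (fun h => by simpa using congrFun h 0)
    simpa [Matrix.mulVec, dotProduct, Fin.sum_univ_two] using this
  have hd : 0 < A 1 1 := by
    have := hA.dotProduct_mulVec_pos (x := (Pi.single 1 1)) (fun h => by simpa using congrFun h 1)
    simpa [Matrix.mulVec, dotProduct, Fin.sum_univ_two] using this
  have hp : 0 < B 0 0 := by
    have := hB.dotProduct_mulVec_pos (x := (Pi.single 0 1)) (fun h => by simpa using congrFun h 0)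
    simpa [Matrix.mulVec, dotProduct, Fin.sum_univ_two] using this
  have hs : 0 < B 1 1 := by
    have := hB.dotProduct_mulVec_pos (x := (Pi.single 1 1)) (fun h => by simpa using congrFun h 1)
    simpa [Matrix.mulVec, dotProduct, Fin.sum_univ_two] using this
  have hCinv : (concentric A B)⁻¹ =
      !![A 1 1, 0, 0, -A 0 1; 0, B 1 1, -B 0 1, 0; 0, -B 0 1, B 0 0, 0; -A 0 1, 0, 0, A 0 0] := by
    apply Matrix.inv_eq_right_inv
    ext i j
    fin_cases i <;> fin_cases j <;>
      simp [concentric, Matrix.mul_apply, Fin.sum_univ_four, hAsym, hBsym] <;>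
      nlinarith [hdA2, hdB2]
  have hPhi : Phi22 A B =
      !![(A 1 1*B 0 0 + 2*A 0 1*B 0 1 + A 0 0*B 1 1)/2,
         (A 1 1*B 0 1 + A 0 1*B 1 1 - A 0 1*B 0 0 - A 0 0*B 0 1)/2,
         (A 0 0*B 1 1 - A 1 1*B 0 0)/2,
         (-(A 1 1*B 0 1) - A 0 1*B 1 1 - A 0 1*B 0 0 - A 0 0*B 0 1)/2;
         (A 1 1*B 0 1 + A 0 1*B 1 1 - A 0 1*B 0 0 - A 0 0*B 0 1)/2,
         (A 1 1*B 1 1 - 2*A 0 1*B 0 1 + A 0 0*B 0 0)/2,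
         (-(A 1 1*B 0 1) + A 0 1*B 1 1 + A 0 1*B 0 0 - A 0 0*B 0 1)/2,
         (A 0 0*B 0 0 - A 1 1*B 1 1)/2;
         (A 0 0*B 1 1 - A 1 1*B 0 0)/2,
         (-(A 1 1*B 0 1) + A 0 1*B 1 1 + A 0 1*B 0 0 - A 0 0*B 0 1)/2,
         (A 1 1*B 0 0 - 2*A 0 1*B 0 1 + A 0 0*B 1 1)/2,
         (A 1 1*B 0 1 - A 0 1*B 1 1 + A 0 1*B 0 0 - A 0 0*B 0 1)/2;
         (-(A 1 1*B 0 1) - A 0 1*B 1 1 - A 0 1*B 0 0 - A 0 0*B 0 1)/2,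
         (A 0 0*B 0 0 - A 1 1*B 1 1)/2,
         (A 1 1*B 0 1 - A 0 1*B 1 1 + A 0 1*B 0 0 - A 0 0*B 0 1)/2,
         (A 1 1*B 1 1 + 2*A 0 1*B 0 1 + A 0 0*B 0 0)/2] := by
    ext i j
    fin_cases i <;> fin_cases j <;>
      (simp only [Phi22, Matrix.of_apply, hCinv];
       simp [EBasis, concentric, Matrix.trace, Matrix.diag,
        Matrix.mul_apply, Fin.sum_univ_four, hAsym, hBsym,
        Matrix.transpose_apply, Matrix.vecHead, Matrix.vecTail]) <;> ring
  rw [hPhi]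
  refine Matrix.PosDef.of_dotProduct_mulVec_pos ?_ ?_
  · ext i j
    fin_cases i <;> fin_cases j <;>
      simp [Matrix.conjTranspose_apply] <;> ring
  · intro x hx
    have hx4 : x 0 - x 2 ≠ 0 ∨ x 1 - x 3 ≠ 0 ∨ x 0 + x 2 ≠ 0 ∨ x 1 + x 3 ≠ 0 := by
      by_contra h
      push_neg at h
      obtain ⟨h1, h2, h3, h4⟩ := h
      apply hx
      ext i
      fin_cases i <;> simp <;> linarith
    have hkey := key_ineq (A 0 0) (A 0 1) (A 1 1) (B 0 0) (B 0 1) (B 1 1)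
      (x 0 - x 2) (x 1 - x 3) (x 0 + x 2) (x 1 + x 3)
      ha hd hp hs (by nlinarith [hdA2]) (by nlinarith [hdB2]) hx4
    have heq : star x ⬝ᵥ
        ((!![(A 1 1*B 0 0 + 2*A 0 1*B 0 1 + A 0 0*B 1 1)/2,
         (A 1 1*B 0 1 + A 0 1*B 1 1 - A 0 1*B 0 0 - A 0 0*B 0 1)/2,
         (A 0 0*B 1 1 - A 1 1*B 0 0)/2,
         (-(A 1 1*B 0 1) - A 0 1*B 1 1 - A 0 1*B 0 0 - A 0 0*B 0 1)/2;
         (A 1 1*B 0 1 + A 0 1*B 1 1 - A 0 1*B 0 0 - A 0 0*B 0 1)/2,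
         (A 1 1*B 1 1 - 2*A 0 1*B 0 1 + A 0 0*B 0 0)/2,
         (-(A 1 1*B 0 1) + A 0 1*B 1 1 + A 0 1*B 0 0 - A 0 0*B 0 1)/2,
         (A 0 0*B 0 0 - A 1 1*B 1 1)/2;
         (A 0 0*B 1 1 - A 1 1*B 0 0)/2,
         (-(A 1 1*B 0 1) + A 0 1*B 1 1 + A 0 1*B 0 0 - A 0 0*B 0 1)/2,
         (A 1 1*B 0 0 - 2*A 0 1*B 0 1 + A 0 0*B 1 1)/2,
         (A 1 1*B 0 1 - A 0 1*B 1 1 + A 0 1*B 0 0 - A 0 0*B 0 1)/2;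
         (-(A 1 1*B 0 1) - A 0 1*B 1 1 - A 0 1*B 0 0 - A 0 0*B 0 1)/2,
         (A 0 0*B 0 0 - A 1 1*B 1 1)/2,
         (A 1 1*B 0 1 - A 0 1*B 1 1 + A 0 1*B 0 0 - A 0 0*B 0 1)/2,
         (A 1 1*B 1 1 + 2*A 0 1*B 0 1 + A 0 0*B 0 0)/2] : Matrix (Fin 4) (Fin 4) ℝ) *ᵥ x)
        = (A 1 1 * (B 0 0*(x 0 - x 2)^2 + 2*(B 0 1)*(x 0 - x 2)*(x 1 - x 3) + B 1 1*(x 1 - x 3)^2)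
          + A 0 0 * (B 1 1*(x 0 + x 2)^2 - 2*(B 0 1)*(x 0 + x 2)*(x 1 + x 3) + B 0 0*(x 1 + x 3)^2)
          + 2 * A 0 1 * ((x 0 + x 2)*(B 0 1*(x 0 - x 2) + B 1 1*(x 1 - x 3))
              - (x 1 + x 3)*(B 0 0*(x 0 - x 2) + B 0 1*(x 1 - x 3)))) / 2 := by
      simp [Matrix.mulVec, dotProduct, Fin.sum_univ_four]
      ring
    rw [heq]
    linarith
end

section
/- Let X ∈ G_{I_{n,n}} = {X : Xᵀ I_{n,n} X = I_{n,n}} with diagonal n×n blocks A (upper left) and D (lower right). If X lies in the connected component of the identity SO⁺(n,n,ℝ), then det(X) = 1, det(A) > 0 and det(D) > 0. -/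
open Matrix

lemma aux_blocks {n : ℕ} (Y : Matrix (Fin n ⊕ Fin n) (Fin n ⊕ Fin n) ℝ)
    (hY : Yᵀ * fromBlocks 1 0 0 (-1) * Y = fromBlocks 1 0 0 (-1)) :
    Y.toBlocks₁₁.det ≠ 0 ∧ Y.toBlocks₂₂.det ≠ 0 ∧ Y.det ^ 2 = 1 := by
  have h := hY
  rw [← Matrix.fromBlocks_toBlocks Y] at h
  simp only [Matrix.fromBlocks_transpose, Matrix.fromBlocks_multiply,
    Matrix.mul_one, Matrix.mul_neg, Matrix.mul_zero, Matrix.zero_mul, Matrix.one_mul,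
    add_zero, zero_add, ← sub_eq_add_neg] at h
  rw [Matrix.fromBlocks_inj] at h
  obtain ⟨h1, -, -, h4⟩ := h
  rw [sub_mul, zero_mul, zero_sub, ← sub_eq_add_neg] at h1 h4
  have hA : Y.toBlocks₁₁ᵀ * Y.toBlocks₁₁ = 1 + Y.toBlocks₂₁ᵀ * Y.toBlocks₂₁ :=
    sub_eq_iff_eq_add.mp h1
  have hD : Y.toBlocks₂₂ᵀ * Y.toBlocks₂₂ = 1 + Y.toBlocks₁₂ᵀ * Y.toBlocks₁₂ := by
    rw [sub_eq_iff_eq_add] at h4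
    rw [h4]; abel
  have pA : (Y.toBlocks₁₁ᵀ * Y.toBlocks₁₁).PosDef := by
    rw [hA, ← Matrix.conjTranspose_eq_transpose_of_trivial]
    exact Matrix.PosDef.add_posSemidef Matrix.PosDef.one
      (Matrix.posSemidef_conjTranspose_mul_self _)
  have pD : (Y.toBlocks₂₂ᵀ * Y.toBlocks₂₂).PosDef := by
    rw [hD, ← Matrix.conjTranspose_eq_transpose_of_trivial]
    exact Matrix.PosDef.add_posSemidef Matrix.PosDef.one
      (Matrix.posSemidef_conjTranspose_mul_self _)
  have dA : Y.toBlocks₁₁.det ≠ 0 := by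
    have := pA.det_pos
    rw [Matrix.det_mul, Matrix.det_transpose] at this
    intro hc; rw [hc] at this; simp at this
  have dD : Y.toBlocks₂₂.det ≠ 0 := by
    have := pD.det_pos
    rw [Matrix.det_mul, Matrix.det_transpose] at this
    intro hc; rw [hc] at this; simp at this
  refine ⟨dA, dD, ?_⟩
  have hd := congrArg Matrix.det hY
  rw [Matrix.det_mul, Matrix.det_mul, Matrix.det_transpose] at hd
  have hJ : (fromBlocks (1:Matrix (Fin n) (Fin n) ℝ) (0:Matrix (Fin n) (Fin n) ℝ) (0:Matrix (Fin n) (Fin n) ℝ) (-1)).det ≠ 0 := by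
    simp [Matrix.det_fromBlocks_zero₂₁, Matrix.det_neg, pow_ne_zero]
  have h2 : (fromBlocks (1:Matrix (Fin n) (Fin n) ℝ) (0:Matrix (Fin n) (Fin n) ℝ) (0:Matrix (Fin n) (Fin n) ℝ) (-1)).det * (Y.det * Y.det)
      = (fromBlocks (1:Matrix (Fin n) (Fin n) ℝ) (0:Matrix (Fin n) (Fin n) ℝ) (0:Matrix (Fin n) (Fin n) ℝ) (-1)).det * 1 := by
    rw [mul_one]; linear_combination hd
  rw [sq]; exact mul_left_cancel₀ hJ h2

lemma aux_sign_pos {α} [TopologicalSpace α] {s : Set α} (hs : IsPreconnected s)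
    {f : α → ℝ} (hf : Continuous f) {a b : α} (ha : a ∈ s) (hb : b ∈ s)
    (hfa : f a = 1) (hne : ∀ x ∈ s, f x ≠ 0) : 0 < f b := by
  by_contra h
  push_neg at h
  have h0 : (0:ℝ) ∈ Set.Icc (f b) (f a) := ⟨h, by rw [hfa]; norm_num⟩
  obtain ⟨x, hx, hfx⟩ := hs.intermediate_value hb ha hf.continuousOn h0
  exact hne x hx hfx

theorem stmt_19 {n : ℕ} (X : Matrix (Fin n ⊕ Fin n) (Fin n ⊕ Fin n) ℝ)
    (hG : Xᵀ * fromBlocks 1 0 0 (-1) * X = fromBlocks 1 0 0 (-1))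
    (hconn : X ∈ connectedComponentIn
        {Y : Matrix (Fin n ⊕ Fin n) (Fin n ⊕ Fin n) ℝ |
          Yᵀ * fromBlocks 1 0 0 (-1) * Y = fromBlocks 1 0 0 (-1)} 1) :
    X.det = 1 ∧ 0 < (X.toBlocks₁₁).det ∧ 0 < (X.toBlocks₂₂).det := by
  set S : Set (Matrix (Fin n ⊕ Fin n) (Fin n ⊕ Fin n) ℝ) :=
    {Y | Yᵀ * fromBlocks 1 0 0 (-1) * Y = fromBlocks 1 0 0 (-1)} with hSdef
  have h1S : (1 : Matrix (Fin n ⊕ Fin n) (Fin n ⊕ Fin n) ℝ) ∈ S := by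
    simp [hSdef, Set.mem_setOf_eq]
  have hT : IsPreconnected (connectedComponentIn S 1) :=
    (isConnected_connectedComponentIn_iff.mpr h1S).isPreconnected
  have h1T : (1 : Matrix (Fin n ⊕ Fin n) (Fin n ⊕ Fin n) ℝ) ∈ connectedComponentIn S 1 :=
    mem_connectedComponentIn h1S
  have hsub := connectedComponentIn_subset S (1 : Matrix (Fin n ⊕ Fin n) (Fin n ⊕ Fin n) ℝ)
  have contA : Continuous fun Y : Matrix (Fin n ⊕ Fin n) (Fin n ⊕ Fin n) ℝ =>
      (Y.toBlocks₁₁).det := by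
    apply Continuous.matrix_det
    refine continuous_matrix fun i j => ?_
    simp only [Matrix.toBlocks₁₁, Matrix.of_apply]
    exact (continuous_apply _).comp (continuous_apply _)
  have contD : Continuous fun Y : Matrix (Fin n ⊕ Fin n) (Fin n ⊕ Fin n) ℝ =>
      (Y.toBlocks₂₂).det := by
    apply Continuous.matrix_det
    refine continuous_matrix fun i j => ?_
    simp only [Matrix.toBlocks₂₂, Matrix.of_apply]
    exact (continuous_apply _).comp (continuous_apply _)
  have contdet : Continuous fun Y : Matrix (Fin n ⊕ Fin n) (Fin n ⊕ Fin n) ℝ => Y.det :=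
    continuous_id.matrix_det
  have hA1 : ((1 : Matrix (Fin n ⊕ Fin n) (Fin n ⊕ Fin n) ℝ).toBlocks₁₁).det = 1 := by
    rw [← Matrix.fromBlocks_one, Matrix.toBlocks_fromBlocks₁₁, Matrix.det_one]
  have hD1 : ((1 : Matrix (Fin n ⊕ Fin n) (Fin n ⊕ Fin n) ℝ).toBlocks₂₂).det = 1 := by
    rw [← Matrix.fromBlocks_one, Matrix.toBlocks_fromBlocks₂₂, Matrix.det_one]
  have posA := aux_sign_pos hT contA h1T hconn hA1
    (fun x hx => (aux_blocks x (hsub hx)).1)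
  have posD := aux_sign_pos hT contD h1T hconn hD1
    (fun x hx => (aux_blocks x (hsub hx)).2.1)
  have posdet := aux_sign_pos hT contdet h1T hconn Matrix.det_one
    (fun x hx => by
      have := (aux_blocks x (hsub hx)).2.2
      intro hc; rw [hc] at this; simp at this)
  have hsq := (aux_blocks X hG).2.2
  refine ⟨?_, posA, posD⟩
  nlinarith [hsq, posdet]
end
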